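/- Let M, N, L be positive constants and δ ∈ (0,1). Define f(y) = My - Ny^{1+δ} - Ly^{1-δ} for y > 0. Then sup_{y>0} f(y) > 0 if M² > 4LN, and sup_{y>0} f(y) = 0 if M² ≤ 4LN. -/

import Mathlib

open Real Set

theorem stmt0 (M N L δ : ℝ) (hM : 0 < M) (hN : 0 < N) (hL : 0 < L)
    (hδ : δ ∈ Set.Ioo (0:ℝ) 1)
    (f : ℝ → ℝ)
    (hf : ∀ y > 0, f y = M * y - N * y ^ (1 + δ) - L * y ^ (1 - δ)) :
    (M ^ 2 > 4 * L * N → 0 < sSup (f '' Set.Ioi 0)) ∧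
    (M ^ 2 ≤ 4 * L * N → sSup (f '' Set.Ioi 0) = 0) := by
  obtain ⟨hδ0, hδ1⟩ := hδ
  have hδne : δ ≠ 0 := ne_of_gt hδ0
  -- factored form
  have hfac : ∀ y : ℝ, 0 < y →
      f y = (y / y ^ δ) * (M * y ^ δ - N * (y ^ δ) ^ 2 - L) := by
    intro y hy
    have ht : (0:ℝ) < y ^ δ := Real.rpow_pos_of_pos hy δ
    have h1 : y ^ (1 + δ) = y * y ^ δ := by
      rw [Real.rpow_add hy, Real.rpow_one]
    have h2 : y ^ (1 - δ) = y / y ^ δ := by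
      rw [Real.rpow_sub hy, Real.rpow_one]
    rw [hf y hy, h1, h2]
    field_simp
  constructor
  · intro hgt
    -- bounded above
    set y0 : ℝ := (M / N) ^ (1 / δ) with hy0def
    have hy0 : 0 < y0 := Real.rpow_pos_of_pos (div_pos hM hN) _
    have hy0δ : y0 ^ δ = M / N := by
      rw [hy0def, ← Real.rpow_mul (le_of_lt (div_pos hM hN))]
      rw [one_div, inv_mul_cancel₀ hδne, Real.rpow_one]
    have hbdd : BddAbove (f '' Set.Ioi 0) := by
      refine ⟨M * y0, ?_⟩
      rintro _ ⟨y, hy, rfl⟩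
      have hy : (0:ℝ) < y := hy
      have ht : (0:ℝ) < y ^ δ := Real.rpow_pos_of_pos hy δ
      have h1 : y ^ (1 + δ) = y * y ^ δ := by
        rw [Real.rpow_add hy, Real.rpow_one]
      have h2pos : (0:ℝ) < y ^ (1 - δ) := Real.rpow_pos_of_pos hy _
      rw [hf y hy]
      rcases le_total y y0 with h | h
      · nlinarith [Real.rpow_pos_of_pos hy (1 + δ)]
      · have : y0 ^ δ ≤ y ^ δ := Real.rpow_le_rpow (le_of_lt hy0) h (le_of_lt hδ0)
        rw [hy0δ] at this
        have hMy : M * y ≤ N * y ^ (1 + δ) := by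
          rw [h1]
          rw [div_le_iff₀ hN] at this
          nlinarith
        nlinarith [mul_pos hM hy0]
    -- witness
    set y1 : ℝ := (M / (2 * N)) ^ (1 / δ) with hy1def
    have hMN : (0:ℝ) < M / (2 * N) := div_pos hM (by linarith)
    have hy1 : 0 < y1 := Real.rpow_pos_of_pos hMN _
    have hy1δ : y1 ^ δ = M / (2 * N) := by
      rw [hy1def, ← Real.rpow_mul (le_of_lt hMN)]
      rw [one_div, inv_mul_cancel₀ hδne, Real.rpow_one]
    have hfy1 : 0 < f y1 := by
      rw [hfac y1 hy1, hy1δ]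
      have h1 : 0 < y1 / (M / (2 * N)) := div_pos hy1 hMN
      have h2 : 0 < M * (M / (2 * N)) - N * (M / (2 * N)) ^ 2 - L := by
        have hN2 : (0:ℝ) < 2 * N := by linarith
        rw [div_pow]
        field_simp
        nlinarith [mul_pos hN hN, mul_pos (mul_pos hN hN) hN]
      positivity
    calc (0:ℝ) < f y1 := hfy1
      _ ≤ sSup (f '' Set.Ioi 0) := le_csSup hbdd ⟨y1, by simpa using hy1, rfl⟩
  · intro hle
    have hnonpos : ∀ y : ℝ, 0 < y → f y ≤ 0 := by
      intro y hy
      rw [hfac y hy]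
      have ht : (0:ℝ) < y ^ δ := Real.rpow_pos_of_pos hy δ
      have h1 : 0 < y / y ^ δ := div_pos hy ht
      have h2 : M * y ^ δ - N * (y ^ δ) ^ 2 - L ≤ 0 := by
        nlinarith [sq_nonneg (2 * N * y ^ δ - M)]
      nlinarith
    have hbdd : BddAbove (f '' Set.Ioi 0) := by
      refine ⟨0, ?_⟩
      rintro _ ⟨y, hy, rfl⟩
      exact hnonpos y hy
    have hne : (f '' Set.Ioi 0).Nonempty := ⟨f 1, ⟨1, by norm_num, rfl⟩⟩
    have hub : sSup (f '' Set.Ioi 0) ≤ 0 := by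
      apply csSup_le hne
      rintro _ ⟨y, hy, rfl⟩
      exact hnonpos y hy
    have hlb : 0 ≤ sSup (f '' Set.Ioi 0) := by
      have hcont : Filter.Tendsto (fun y : ℝ => -(N + L) * y ^ (1 - δ))
          (nhdsWithin 0 (Set.Ioi 0)) (nhds 0) := by
        have h0 : ContinuousAt (fun y : ℝ => y ^ (1 - δ)) 0 :=
          Real.continuousAt_rpow_const 0 (1 - δ) (Or.inr (by linarith))
        have := (h0.tendsto.mono_left (nhdsWithin_le_nhds (s := Set.Ioi (0:ℝ)))).const_mul (-(N + L))
        simpa [Real.zero_rpow (show (1:ℝ) - δ ≠ 0 by intro h; linarith [h])] using this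
      refine le_of_tendsto hcont ?_
      have hmem : ∀ᶠ y in nhdsWithin (0:ℝ) (Set.Ioi 0), y ∈ Set.Ioi (0:ℝ) :=
        self_mem_nhdsWithin
      have hlt1 : ∀ᶠ y in nhdsWithin (0:ℝ) (Set.Ioi 0), y < 1 :=
        Filter.Eventually.filter_mono nhdsWithin_le_nhds
          (eventually_lt_nhds (by norm_num))
      filter_upwards [hmem, hlt1] with y hy hy1
      have hy : (0:ℝ) < y := hy
      have hpow : y ^ (1 + δ) ≤ y ^ (1 - δ) :=
        Real.rpow_le_rpow_of_exponent_ge hy (le_of_lt hy1) (by linarith)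
      have hfy : -(N + L) * y ^ (1 - δ) ≤ f y := by
        rw [hf y hy]
        have hpos : (0:ℝ) < y ^ (1 - δ) := Real.rpow_pos_of_pos hy _
        nlinarith
      exact le_trans hfy (le_csSup hbdd ⟨y, hy, rfl⟩)
    linarith
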